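/- arXiv:1610.08644 — 2 statements merged into one kernel-verified Lean document; each statement's English description precedes it below -/
import Mathlib

section
/- Let c̃:ℝ₊→ℝ₊ be decreasing with lim_{x→∞} c̃(x)=c>0 where c < L'(0−). Then lim_{λ→∞} x*(λ, c̃(λ)·λ) = −H(c), where x*(λ,y) is the unique positive solution of U'(x)+λL'(−x)=y and H=(L')⁻¹. Moreover, λ↦x*(λ,cλ) converges to −H(c) monotonously from above (it is decreasing in λ). -/
open Set Filter Topology

theorem stmt10 (U U' L L' : ℝ → ℝ)
    -- U is a utility function
    (hUmono : StrictMonoOn U (Ioi (0:ℝ)))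
    (hUconc : StrictConcaveOn ℝ (Ioi (0:ℝ)) U)
    (hUderiv : ∀ x ∈ Ioi (0:ℝ), HasDerivAt U (U' x) x)
    (hU'cont : ContinuousOn U' (Ioi (0:ℝ)))
    (hU'pos : ∀ x ∈ Ioi (0:ℝ), 0 < U' x)
    (hUInada0 : Tendsto U' (𝓝[>] (0:ℝ)) atTop)
    (hUInadaTop : Tendsto U' atTop (𝓝 (0:ℝ)))
    -- L is a loss function
    (hLmono : StrictMonoOn L (Iio (0:ℝ)))
    (hLconv : StrictConvexOn ℝ (Iio (0:ℝ)) L)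
    (hLderiv : ∀ x ∈ Iio (0:ℝ), HasDerivAt L (L' x) x)
    (hL'cont : ContinuousOn L' (Iio (0:ℝ)))
    (l₀ : ℝ) (hL'0 : Tendsto L' (𝓝[<] (0:ℝ)) (𝓝 l₀))
    (hL'bot : Tendsto L' atBot (𝓝 (0:ℝ)))
    -- xstar lam y is the unique positive solution of U'(x) + lam * L'(-x) = y
    (xstar : ℝ → ℝ → ℝ)
    (hx : ∀ lam ≥ (0:ℝ), ∀ y > (0:ℝ),
      xstar lam y ∈ Ioi (0:ℝ) ∧ U' (xstar lam y) + lam * L' (-(xstar lam y)) = y)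
    (hxuniq : ∀ lam ≥ (0:ℝ), ∀ y > (0:ℝ), ∀ x ∈ Ioi (0:ℝ),
      U' x + lam * L' (-x) = y → x = xstar lam y)
    -- H is the inverse of L' on (0, L'(0-)) = (0, l₀)
    (H : ℝ → ℝ)
    (hL'range : ∀ x ∈ Iio (0:ℝ), L' x ∈ Ioo (0:ℝ) l₀)
    (hH : ∀ e ∈ Ioo (0:ℝ) l₀, H e ∈ Iio (0:ℝ) ∧ L' (H e) = e)
    -- c̃ : ℝ₊ → ℝ₊ decreasing with limit c > 0
    (ctilde : ℝ → ℝ) (c : ℝ) (hc : 0 < c) (hcl : c < l₀)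
    (hctnonneg : ∀ x ≥ (0:ℝ), 0 ≤ ctilde x)
    (hctanti : ∀ a b : ℝ, 0 ≤ a → a ≤ b → ctilde b ≤ ctilde a)
    (hctlim : Tendsto ctilde atTop (𝓝 c)) :
    Tendsto (fun lam => xstar lam (ctilde lam * lam)) atTop (𝓝 (-(H c))) ∧
    (∀ a b : ℝ, 0 < a → a ≤ b → xstar b (c * b) ≤ xstar a (c * a)) ∧
    (∀ lam > (0:ℝ), -(H c) ≤ xstar lam (c * lam)) := by
  -- U' is strictly antitone on Ioi 0
  have hU'anti : StrictAntiOn U' (Ioi (0:ℝ)) := by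
    intro x hxm y hym hxy
    have h1 := hUconc.slope_lt_of_hasDerivAt hxm hym hxy (hUderiv x hxm)
    have h2 := hUconc.lt_slope_of_hasDerivAt hxm hym hxy (hUderiv y hym)
    linarith
  -- L' is strictly monotone on Iio 0
  have hL'mono : StrictMonoOn L' (Iio (0:ℝ)) := by
    intro x hxm y hym hxy
    have h1 := hLconv.lt_slope_of_hasDerivAt hxm hym hxy (hLderiv x hxm)
    have h2 := hLconv.slope_lt_of_hasDerivAt hxm hym hxy (hLderiv y hym)
    linarith
  -- H c
  have hHc := hH c ⟨hc, hcl⟩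
  have hHcneg : H c < 0 := hHc.1
  have hHcL : L' (H c) = c := hHc.2
  -- c ≤ ctilde x for x ≥ 0
  have hctge : ∀ x ≥ (0:ℝ), c ≤ ctilde x := by
    intro x hx0
    by_contra hlt
    push_neg at hlt
    have : c ≤ ctilde x := by
      have hev : ∀ᶠ y in atTop, ctilde y ≤ ctilde x :=
        eventually_atTop.2 ⟨x, fun y hy => hctanti x y hx0 hy⟩
      exact le_of_tendsto hctlim hev
    linarith
  -- the map x ↦ U' x + lam * L'(-x) is "antitone-like": comparison lemma
  have hcomp : ∀ lam ≥ (0:ℝ), ∀ x ∈ Ioi (0:ℝ), ∀ y ∈ Ioi (0:ℝ),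
      U' x + lam * L' (-x) ≤ U' y + lam * L' (-y) → y ≤ x := by
    intro lam hlam x hxm y hym hle
    by_contra hlt
    push_neg at hlt
    have hU : U' y < U' x := hU'anti hxm hym hlt
    have hL : L' (-y) ≤ L' (-x) :=
      (hL'mono (show -y < (0:ℝ) from neg_lt_zero.2 (show (0:ℝ) < y from hym)) (show -x < (0:ℝ) from neg_lt_zero.2 (show (0:ℝ) < x from hxm)) (by linarith)).le
    nlinarith
  -- Part 3: lower bound
  have part3 : ∀ lam > (0:ℝ), -(H c) < xstar lam (c * lam) := by
    intro lam hlam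
    have hy : c * lam > 0 := mul_pos hc hlam
    obtain ⟨hxpos, hxeq⟩ := hx lam hlam.le (c * lam) hy
    set x := xstar lam (c * lam) with hxdef
    have hxgt : (0:ℝ) < x := hxpos
    have hU'x : 0 < U' x := hU'pos x hxpos
    have hLlt : L' (-x) < c := by
      have : lam * L' (-x) = c * lam - U' x := by linarith
      nlinarith
    -- L'(-x) < c = L'(H c) ⇒ -x < H c
    by_contra hge
    push_neg at hge
    have hxneg : -x < 0 := by linarith
    rcases eq_or_lt_of_le (by linarith : H c ≤ -x) with heq | hlt2
    · rw [← heq, hHcL] at hLlt; linarith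
    · have := hL'mono hHcneg hxneg hlt2
      rw [hHcL] at this; linarith
  -- Part 2: monotonicity
  have part2 : ∀ a b : ℝ, 0 < a → a ≤ b → xstar b (c * b) ≤ xstar a (c * a) := by
    intro a b ha hab
    have hb : 0 < b := ha.trans_le hab
    obtain ⟨hxa, hea⟩ := hx a ha.le (c * a) (mul_pos hc ha)
    obtain ⟨hxb, heb⟩ := hx b hb.le (c * b) (mul_pos hc hb)
    set xa := xstar a (c * a)
    set xb := xstar b (c * b)
    have hU'b : 0 < U' xb := hU'pos xb hxb
    -- From heb : U' xb + b * L'(-xb) = c*b, get U' xb + a * L'(-xb) ≥ c*a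
    have key : U' xa + a * L' (-xa) ≤ U' xb + a * L' (-xb) := by
      rw [hea]
      have hb' : b * L' (-xb) = c * b - U' xb := by linarith
      have h3 : c * a * b ≤ (U' xb + a * L' (-xb)) * b := by
        nlinarith [mul_nonneg hU'b.le (sub_nonneg.2 hab)]
      exact le_of_mul_le_mul_right h3 hb
    exact hcomp a ha.le xa hxa xb hxb key
  refine ⟨?_, part2, fun lam hlam => (part3 lam hlam).le⟩
  -- Part 1: the limit
  rw [Metric.tendsto_atTop]
  intro ε hε
  set ε' := min ε (-(H c) / 2) with hε'def
  have hε'pos : 0 < ε' := lt_min hε (by linarith)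
  have hε'le : ε' ≤ ε := min_le_left _ _
  set p := -(H c) - ε' with hpdef
  set q := -(H c) + ε' with hqdef
  have hppos : 0 < p := by
    have : ε' ≤ -(H c) / 2 := min_le_right _ _
    simp only [hpdef]; linarith
  have hqpos : 0 < q := by simp only [hqdef]; linarith
  have hpneg : -p < 0 := by linarith
  have hqneg : -q < 0 := by linarith
  -- L'(-q) < c < L'(-p)
  have hLp : c < L' (-p) := by
    have : H c < -p := by simp only [hpdef]; linarith
    have := hL'mono hHcneg hpneg this
    rwa [hHcL] at this
  have hLq : L' (-q) < c := by
    have : -q < H c := by simp only [hqdef]; linarith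
    have := hL'mono hqneg hHcneg this
    rwa [hHcL] at this
  -- eventually ctilde lam < L'(-p)
  obtain ⟨N1, hN1⟩ := eventually_atTop.1 (hctlim.eventually_lt_const hLp)
  -- threshold for the upper bound
  obtain ⟨N2, hN2⟩ : ∃ N2 : ℝ, ∀ lam ≥ N2, U' q / lam < c - L' (-q) ∧ 0 < lam := by
    refine ⟨max 1 (U' q / (c - L' (-q)) + 1), fun lam hlam => ?_⟩
    have h1 : (1:ℝ) ≤ lam := le_trans (le_max_left _ _) hlam
    have h2 : U' q / (c - L' (-q)) + 1 ≤ lam := le_trans (le_max_right _ _) hlam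
    have hU'q : 0 < U' q := hU'pos q hqpos
    have hden : 0 < c - L' (-q) := by linarith
    constructor
    · rw [div_lt_iff₀ (by linarith : (0:ℝ) < lam)]
      have : U' q / (c - L' (-q)) < lam := by linarith
      rw [div_lt_iff₀ hden] at this
      nlinarith
    · linarith
  refine ⟨max (max N1 N2) 1, fun lam hlam => ?_⟩
  have hlamN1 : N1 ≤ lam := le_trans (le_trans (le_max_left _ _) (le_max_left _ _)) hlam
  have hlamN2 : N2 ≤ lam := le_trans (le_trans (le_max_right _ _) (le_max_left _ _)) hlam
  have hlam1 : (1:ℝ) ≤ lam := le_trans (le_max_right _ _) hlam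
  have hlampos : (0:ℝ) < lam := by linarith
  have hct : c ≤ ctilde lam := hctge lam hlampos.le
  have hypos : 0 < ctilde lam * lam := mul_pos (by linarith) hlampos
  obtain ⟨hxpos, hxeq⟩ := hx lam hlampos.le (ctilde lam * lam) hypos
  set x := xstar lam (ctilde lam * lam) with hxdef
  have hxgt0 : (0:ℝ) < x := hxpos
  have hU'x : 0 < U' x := hU'pos x hxpos
  -- L'(-x) < ctilde lam
  have hLx : L' (-x) < ctilde lam := by nlinarith
  -- lower bound: p < x
  have hlow : p < x := by
    have hctlt : ctilde lam < L' (-p) := hN1 lam hlamN1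
    have : L' (-x) < L' (-p) := lt_trans hLx hctlt
    by_contra hge
    push_neg at hge
    rcases eq_or_lt_of_le hge with heq | hlt2
    · rw [heq] at this; linarith
    · have := hL'mono hpneg (by linarith : -x < 0) (by linarith)
      linarith
  -- upper bound: x < q
  have hhigh : x < q := by
    by_contra hge
    push_neg at hge
    have hU'le : U' x ≤ U' q := by
      rcases eq_or_lt_of_le hge with heq | hlt2
      · rw [heq]
      · exact (hU'anti hqpos hxpos hlt2).le
    have hLge : L' (-x) ≤ L' (-q) := by
      rcases eq_or_lt_of_le hge with heq | hlt2
      · rw [heq]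
      · exact (hL'mono (by linarith : -x < 0) hqneg (by linarith)).le
    have hthresh := hN2 lam hlamN2
    -- L'(-x) = ctilde lam - U' x / lam ≥ c - U' q / lam > L'(-q)
    have h1 : L' (-x) = ctilde lam - U' x / lam := by field_simp; linarith
    have h2 : c - U' q / lam ≤ L' (-x) := by
      rw [h1]
      have hdiv : U' x / lam ≤ U' q / lam := (div_le_div_iff_of_pos_right hlampos).2 hU'le
      linarith
    linarith [hthresh.1, hLge]
  have : |x - -(H c)| < ε := by
    rw [abs_lt]
    constructor
    · simp only [hpdef] at hlow; linarith
    · simp only [hqdef] at hhigh; linarith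
  simpa [Real.dist_eq] using this
end

section
/- Let λ↦ŷ(λ) be a function on (0,∞) with values in (0,∞) such that for each λ, ŷ(λ) is the unique y>0 satisfying E[Z_T·x*(λ, yZ_T)]=x, where x*(λ,·) satisfies x*(αλ,αy)≤x*(λ,y) for α≥1 and y↦x*(λ,y) is strictly decreasing. Then λ↦ŷ(λ)/λ is decreasing on (0,∞), and hence lim_{λ→∞} ŷ(λ)/λ exists in [0,∞). -/
open Set Filter Topology MeasureTheory

theorem stmt18 {Ω : Type*} [MeasurableSpace Ω] (P : Measure Ω) [IsProbabilityMeasure P]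
    (Z : Ω → ℝ) (hZpos : ∀ᵐ ω ∂P, 0 < Z ω) (hZint : Integrable Z P)
    (hZ1 : ∫ ω, Z ω ∂P = 1)
    (x : ℝ) (hx : 0 < x)
    (xstar : ℝ → ℝ → ℝ)
    -- y ↦ x*(λ,y) is strictly decreasing on (0,∞)
    (hxanti : ∀ lam ≥ (0:ℝ), ∀ y₁ y₂ : ℝ, 0 < y₁ → y₁ < y₂ → xstar lam y₂ < xstar lam y₁)
    -- x*(αλ, αy) ≤ x*(λ, y) for α ≥ 1
    (hxscale : ∀ α ≥ (1:ℝ), ∀ lam ≥ (0:ℝ), ∀ y > (0:ℝ),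
      xstar (α * lam) (α * y) ≤ xstar lam y)
    (hint : ∀ lam > (0:ℝ), ∀ y > (0:ℝ),
      Integrable (fun ω => Z ω * xstar lam (y * Z ω)) P)
    -- ŷ(λ) is the unique y > 0 with E[Z·x*(λ, yZ)] = x
    (yhat : ℝ → ℝ)
    (hyhat : ∀ lam > (0:ℝ), yhat lam > 0 ∧
      ∫ ω, Z ω * xstar lam (yhat lam * Z ω) ∂P = x)
    (hyuniq : ∀ lam > (0:ℝ), ∀ y > (0:ℝ),
      (∫ ω, Z ω * xstar lam (y * Z ω) ∂P = x) → y = yhat lam) :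
    (∀ lam mu : ℝ, 0 < lam → lam ≤ mu → yhat mu / mu ≤ yhat lam / lam) ∧
    (∃ l : ℝ, 0 ≤ l ∧ Tendsto (fun lam => yhat lam / lam) atTop (𝓝 l)) := by
  have key : ∀ lam mu : ℝ, 0 < lam → lam ≤ mu → yhat mu / mu ≤ yhat lam / lam := by
    intro lam mu hlam hle
    have hmu : 0 < mu := lt_of_lt_of_le hlam hle
    set α : ℝ := mu / lam with hα
    have hα1 : (1:ℝ) ≤ α := (one_le_div hlam).2 hle
    set y : ℝ := lam * yhat mu / mu with hy
    have hymu := hyhat mu hmu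
    have hypos : 0 < y := by
      apply div_pos (mul_pos hlam hymu.1) hmu
    have hαy : α * y = yhat mu := by
      rw [hα, hy]
      field_simp
    have hαlam : α * lam = mu := by rw [hα]; field_simp
    -- step 1: x ≤ ∫ Z xstar lam (y Z)
    have h1 : x ≤ ∫ ω, Z ω * xstar lam (y * Z ω) ∂P := by
      rw [← hymu.2]
      apply integral_mono_ae (hint mu hmu (yhat mu) hymu.1) (hint lam hlam y hypos)
      filter_upwards [hZpos] with ω hω
      have := hxscale α hα1 lam hlam.le (y * Z ω) (mul_pos hypos hω)
      rw [hαlam, ← mul_assoc, hαy] at this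
      exact mul_le_mul_of_nonneg_left this hω.le
    -- step 2: y ≤ yhat lam
    have h2 : y ≤ yhat lam := by
      by_contra hgt
      push_neg at hgt
      have hyl := (hyhat lam hlam).1
      have h3 : ∫ ω, Z ω * xstar lam (y * Z ω) ∂P ≤ x := by
        rw [← (hyhat lam hlam).2]
        apply integral_mono_ae (hint lam hlam y hypos) (hint lam hlam (yhat lam) hyl)
        filter_upwards [hZpos] with ω hω
        have := hxanti lam hlam.le (yhat lam * Z ω) (y * Z ω) (mul_pos hyl hω)
          (by exact mul_lt_mul_of_pos_right hgt hω)
        exact mul_le_mul_of_nonneg_left this.le hω.le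
      have heq := le_antisymm h3 h1
      have := hyuniq lam hlam y hypos heq
      exact absurd this (ne_of_gt hgt)
    calc yhat mu / mu = y / lam := by rw [hy]; field_simp
      _ ≤ yhat lam / lam := div_le_div_of_nonneg_right h2 hlam.le
  refine ⟨key, ?_⟩
  set g : ℝ → ℝ := fun lam => yhat (max lam 1) / (max lam 1) with hg
  have hanti : Antitone g := by
    intro a b hab
    exact key (max a 1) (max b 1) (lt_of_lt_of_le one_pos (le_max_right a 1))
      (max_le_max hab le_rfl)
  have hpos : ∀ lam, 0 ≤ g lam := fun lam => by
    have h1 : (0:ℝ) < max lam 1 := lt_of_lt_of_le one_pos (le_max_right lam 1)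
    exact le_of_lt (div_pos (hyhat _ h1).1 h1)
  have hbdd : BddBelow (Set.range g) := ⟨0, by rintro _ ⟨a, rfl⟩; exact hpos a⟩
  have htend : Tendsto g atTop (𝓝 (⨅ i, g i)) := tendsto_atTop_ciInf hanti hbdd
  refine ⟨⨅ i, g i, le_ciInf hpos, ?_⟩
  apply htend.congr'
  filter_upwards [eventually_ge_atTop (1:ℝ)] with a ha
  simp [hg, max_eq_left ha]
end
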